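/- Let d ≥ 1 and c, C > 0. For all x, y ∈ ℝ^d and all s < t, ∫_s^t ∫_{ℝ^d} (t−r)^{−1/2} g_{c,C}(x−ζ, t−r) · (r−s)^{−1/2} g_{c,C}(ζ−y, r−s) dζ dr = π c (π/C)^{d/2} · g_{c,C}(x−y, t−s). -/

import Mathlib

open MeasureTheory Real

/-- The Gaussian kernel `g_{c,C}(x,t) = c · t^{-d/2} · exp(-C|x|²/t)`. -/
noncomputable def gker (d : ℕ) (c C : ℝ) (x : EuclideanSpace ℝ (Fin d)) (t : ℝ) : ℝ :=
  c / t ^ ((d : ℝ) / 2) * Real.exp (-C * ‖x‖ ^ 2 / t)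

lemma beta_half : ∫ u in (0:ℝ)..1, u ^ (-(1:ℝ)/2) * (1-u) ^ (-(1:ℝ)/2) = Real.pi := by
  have hβ : Complex.betaIntegral (1/2) (1/2) = (Real.pi : ℂ) := by
    have h := Complex.Gamma_mul_Gamma_eq_betaIntegral
      (s := 1/2) (t := 1/2) (by norm_num [Complex.div_re]) (by norm_num [Complex.div_re])
    rw [Complex.Gamma_one_half_eq] at h
    norm_num [Complex.Gamma_one] at h
    rw [← h, ← Complex.cpow_add _ _ (by exact_mod_cast Real.pi_ne_zero)]
    norm_num
  have key : ((∫ u in (0:ℝ)..1, u ^ (-(1:ℝ)/2) * (1-u) ^ (-(1:ℝ)/2) : ℝ) : ℂ)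
      = Complex.betaIntegral (1/2) (1/2) := by
    rw [Complex.betaIntegral, ← intervalIntegral.integral_ofReal]
    apply intervalIntegral.integral_congr
    intro u hu
    rw [Set.uIcc_of_le (by norm_num : (0:ℝ) ≤ 1)] at hu
    push_cast
    rw [Complex.ofReal_cpow hu.1, Complex.ofReal_cpow (by linarith [hu.2])]
    push_cast
    norm_num
  have := key.trans hβ
  exact_mod_cast this

lemma beta_st {s t : ℝ} (hst : s < t) :
    ∫ r in s..t, (t - r) ^ (-(1:ℝ)/2) * (r - s) ^ (-(1:ℝ)/2) = Real.pi := by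
  have hts : (0:ℝ) < t - s := by linarith
  have h := intervalIntegral.smul_integral_comp_mul_add (a := (0:ℝ)) (b := 1)
    (f := fun r => (t - r) ^ (-(1:ℝ)/2) * (r - s) ^ (-(1:ℝ)/2)) (t - s) s
  have hbounds : (t - s) * 0 + s = s ∧ (t - s) * 1 + s = t := by constructor <;> ring
  rw [hbounds.1, hbounds.2] at h
  rw [← h]
  have hcong : ∫ u in (0:ℝ)..1,
      (t - ((t - s) * u + s)) ^ (-(1:ℝ)/2) * ((t - s) * u + s - s) ^ (-(1:ℝ)/2)
      = ∫ u in (0:ℝ)..1, (t - s)⁻¹ * (u ^ (-(1:ℝ)/2) * (1 - u) ^ (-(1:ℝ)/2)) := by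
    apply intervalIntegral.integral_congr
    intro u hu
    rw [Set.uIcc_of_le (by norm_num : (0:ℝ) ≤ 1)] at hu
    dsimp only
    have e1 : t - ((t - s) * u + s) = (t - s) * (1 - u) := by ring
    have e2 : (t - s) * u + s - s = (t - s) * u := by ring
    rw [e1, e2, Real.mul_rpow hts.le (by linarith [hu.2]),
      Real.mul_rpow hts.le hu.1]
    have : (t - s) ^ (-(1:ℝ)/2) * (t - s) ^ (-(1:ℝ)/2) = (t - s)⁻¹ := by
      rw [← Real.rpow_add hts]
      norm_num [Real.rpow_neg_one]
    calc (t - s) ^ (-(1:ℝ)/2) * (1 - u) ^ (-(1:ℝ)/2)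
          * ((t - s) ^ (-(1:ℝ)/2) * u ^ (-(1:ℝ)/2))
        = ((t - s) ^ (-(1:ℝ)/2) * (t - s) ^ (-(1:ℝ)/2))
          * (u ^ (-(1:ℝ)/2) * (1 - u) ^ (-(1:ℝ)/2)) := by ring
      _ = (t - s)⁻¹ * (u ^ (-(1:ℝ)/2) * (1 - u) ^ (-(1:ℝ)/2)) := by rw [this]
  rw [hcong, intervalIntegral.integral_const_mul, beta_half, smul_eq_mul]
  field_simp

lemma gauss_int (d : ℕ) {b : ℝ} (hb : 0 < b) :
    ∫ v : EuclideanSpace ℝ (Fin d), Real.exp (-b * ‖v‖ ^ 2)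
      = (Real.pi / b) ^ ((d : ℝ) / 2) := by
  rw [GaussianFourier.integral_rexp_neg_mul_sq_norm hb]
  norm_num [finrank_euclideanSpace_fin]

lemma conv_gker (d : ℕ) (c C : ℝ) (hC : 0 < C)
    (x y : EuclideanSpace ℝ (Fin d)) (a b : ℝ) (ha : 0 < a) (hb : 0 < b) :
    ∫ ζ : EuclideanSpace ℝ (Fin d), gker d c C (x - ζ) a * gker d c C (ζ - y) b
      = c * (Real.pi / C) ^ ((d : ℝ) / 2) * gker d c C (x - y) (a + b) := by
  have hab : 0 < a + b := by linarith
  set m : EuclideanSpace ℝ (Fin d) := (a / (a + b)) • y + (b / (a + b)) • x with hm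
  have step1 : ∫ ζ : EuclideanSpace ℝ (Fin d), gker d c C (x - ζ) a * gker d c C (ζ - y) b
      = ∫ u : EuclideanSpace ℝ (Fin d), gker d c C (x - (u + m)) a * gker d c C ((u + m) - y) b :=
    (integral_add_right_eq_self _ m).symm
  set w := x - y with hw
  have hpt : ∀ u : EuclideanSpace ℝ (Fin d),
      gker d c C (x - (u + m)) a * gker d c C ((u + m) - y) b
        = (c ^ 2 / (a ^ ((d : ℝ) / 2) * b ^ ((d : ℝ) / 2))
            * Real.exp (-C * ‖w‖ ^ 2 / (a + b)))
          * Real.exp (-(C * (a + b) / (a * b)) * ‖u‖ ^ 2) := by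
    intro u
    have hx1 : x - (u + m) = (a / (a + b)) • w - u := by
      rw [hm, hw]; match_scalars <;> field_simp <;> ring
    have hy1 : (u + m) - y = u + (b / (a + b)) • w := by
      rw [hm, hw]; match_scalars <;> field_simp <;> ring
    rw [gker, gker, hx1, hy1, norm_sub_sq_real, norm_add_sq_real, real_inner_smul_left,
      real_inner_smul_right, real_inner_comm u w, norm_smul, norm_smul]
    simp only [Real.norm_eq_abs, abs_of_pos (div_pos ha hab), abs_of_pos (div_pos hb hab),
      mul_pow]
    rw [mul_mul_mul_comm, ← Real.exp_add]
    have hexp : -C * ((a / (a + b)) ^ 2 * ‖w‖ ^ 2 - 2 * (a / (a + b) * (inner ℝ u w))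
          + ‖u‖ ^ 2) / a
        + -C * (‖u‖ ^ 2 + 2 * (b / (a + b) * (inner ℝ u w)) + (b / (a + b)) ^ 2 * ‖w‖ ^ 2) / b
        = -C * ‖w‖ ^ 2 / (a + b) + -(C * (a + b) / (a * b)) * ‖u‖ ^ 2 := by
      field_simp
      ring
    rw [hexp, Real.exp_add]
    ring
  rw [step1]
  simp only [hpt]
  rw [integral_const_mul, gauss_int d (by positivity : 0 < C * (a + b) / (a * b))]
  have hrw : (Real.pi / (C * (a + b) / (a * b))) ^ ((d : ℝ) / 2)
      = (Real.pi / C) ^ ((d : ℝ) / 2) * a ^ ((d : ℝ) / 2) * b ^ ((d : ℝ) / 2)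
        / (a + b) ^ ((d : ℝ) / 2) := by
    rw [← Real.mul_rpow (by positivity) (by positivity),
        ← Real.mul_rpow (by positivity) (by positivity),
        ← Real.div_rpow (by positivity) (by positivity)]
    congr 1
    field_simp
  rw [hrw, gker]
  have h1 : (0:ℝ) < a ^ ((d : ℝ) / 2) := Real.rpow_pos_of_pos ha _
  have h2 : (0:ℝ) < b ^ ((d : ℝ) / 2) := Real.rpow_pos_of_pos hb _
  have h3 : (0:ℝ) < (a + b) ^ ((d : ℝ) / 2) := Real.rpow_pos_of_pos hab _
  field_simp

/-- Space-time convolution identity for Gaussian kernels with square-root time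
singularities, combining the Gaussian Chapman–Kolmogorov property with the Beta
integral `∫_s^t (t-r)^{-1/2}(r-s)^{-1/2} dr = π`. -/
theorem stmt5 (d : ℕ) (hd : 1 ≤ d) (c C : ℝ) (hc : 0 < c) (hC : 0 < C)
    (x y : EuclideanSpace ℝ (Fin d)) (s t : ℝ) (hst : s < t) :
    (∫ r in s..t, ∫ ζ : EuclideanSpace ℝ (Fin d),
        ((t - r) ^ (-(1 : ℝ) / 2) * gker d c C (x - ζ) (t - r)) *
          ((r - s) ^ (-(1 : ℝ) / 2) * gker d c C (ζ - y) (r - s)))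
      = Real.pi * c * (Real.pi / C) ^ ((d : ℝ) / 2) * gker d c C (x - y) (t - s) := by
  set K : ℝ := c * (Real.pi / C) ^ ((d : ℝ) / 2) * gker d c C (x - y) (t - s) with hK
  have heq : ∀ r ∈ Set.uIoc s t,
      (∫ ζ : EuclideanSpace ℝ (Fin d),
        ((t - r) ^ (-(1 : ℝ) / 2) * gker d c C (x - ζ) (t - r)) *
          ((r - s) ^ (-(1 : ℝ) / 2) * gker d c C (ζ - y) (r - s)))
        = ((t - r) ^ (-(1 : ℝ) / 2) * (r - s) ^ (-(1 : ℝ) / 2)) * K := by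
    intro r hr
    rw [Set.uIoc_of_le hst.le] at hr
    rcases eq_or_lt_of_le hr.2 with hrt | hrt
    · subst hrt
      simp [Real.zero_rpow (by norm_num : -(1:ℝ)/2 ≠ 0)]
    · have h1 : (∫ ζ : EuclideanSpace ℝ (Fin d),
          ((t - r) ^ (-(1 : ℝ) / 2) * gker d c C (x - ζ) (t - r)) *
            ((r - s) ^ (-(1 : ℝ) / 2) * gker d c C (ζ - y) (r - s)))
          = ((t - r) ^ (-(1 : ℝ) / 2) * (r - s) ^ (-(1 : ℝ) / 2))
            * ∫ ζ : EuclideanSpace ℝ (Fin d),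
                gker d c C (x - ζ) (t - r) * gker d c C (ζ - y) (r - s) := by
        rw [← integral_const_mul]
        congr 1
        funext ζ
        ring
      rw [h1, conv_gker d c C hC x y (t - r) (r - s) (sub_pos.mpr hrt) (sub_pos.mpr hr.1)]
      have : t - r + (r - s) = t - s := by ring
      rw [this, hK]
  rw [intervalIntegral.integral_congr_ae (Filter.Eventually.of_forall heq),
    intervalIntegral.integral_mul_const, beta_st hst, hK]
  ring
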